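/- Let G be a group, D a G-graded division algebra over a field K, p = (p_1,…,p_s) a tuple of positive integers with n = p_1+⋯+p_s, and g = (g_1,…,g_n) ∈ G^n. Equip the tensor product UT(p_1,…,p_s) ⊗_K D with the G-grading in which e_{ij} ⊗ d is homogeneous of degree g_i (deg d) g_j^{-1} for homogeneous d ∈ D. Then UT(p_1,…,p_s) ⊗_K D is isomorphic as a G-graded algebra to A(D, p, g) = End_D F(D, p, g). -/

import Mathlib

open MulOpposite

/-- A grading of a ring `D` by a group `G`. -/
structure RingGrading (G D : Type*) [Group G] [DecidableEq G] [Ring D] where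
  comp : G → AddSubgroup D
  decomp : DirectSum.Decomposition comp
  mul_mem : ∀ {g h : G} {a b : D}, a ∈ comp g → b ∈ comp h → a * b ∈ comp (g * h)
  one_mem : (1 : D) ∈ comp 1

/-- A graded ring is a graded division ring if every nonzero homogeneous element
is invertible. -/
def RingGrading.IsDivision {G D : Type*} [Group G] [DecidableEq G] [Ring D]
    (𝒟 : RingGrading G D) : Prop :=
  ∀ (g : G) (a : D), a ∈ 𝒟.comp g → a ≠ 0 → IsUnit a

variable {G : Type*} [Group G] [DecidableEq G] {D : Type*} [Ring D]

/-- The degree-`h` component of the graded right `D`-module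
`V(D, n, g) = ⊕ᵢ ^{[gᵢ]}D` (modelled as `Fin n → D`): the vectors whose `i`-th
coordinate is homogeneous of degree `gᵢ⁻¹ h`. -/
def stdGrading (𝒟 : RingGrading G D) {n : ℕ} (g : Fin n → G) (h : G) :
    AddSubgroup (Fin n → D) where
  carrier := {v | ∀ i, v i ∈ 𝒟.comp ((g i)⁻¹ * h)}
  zero_mem' := fun _ => (𝒟.comp _).zero_mem
  add_mem' := fun ha hb i => (𝒟.comp _).add_mem (ha i) (hb i)
  neg_mem' := fun ha i => (𝒟.comp _).neg_mem (ha i)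

/-- `blockStart m i = m₁ + ⋯ + mᵢ`, the dimension of the `i`-th member of the flag
determined by the tuple `m`. -/
def blockStart (m : List ℕ) (i : ℕ) : ℕ := (m.take i).sum

/-- The `i`-th member of the flag `𝓕(D, m, g)`: vectors supported in the first
`m₁ + ⋯ + mᵢ` coordinates. -/
def stdFlagMem (m : List ℕ) {n : ℕ} (i : ℕ) : Submodule Dᵐᵒᵖ (Fin n → D) where
  carrier := {v | ∀ j : Fin n, blockStart m i ≤ (j : ℕ) → v j = 0}
  zero_mem' := fun j _ => rfl
  add_mem' := by intro a b ha hb j hj; simp [ha j hj, hb j hj]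
  smul_mem' := by intro c v hv j hj; simp [hv j hj]

/-- The algebra `𝒜(D, m, g) = End_D 𝓕(D, m, g)` of endomorphisms preserving each
member of the flag, as a subring of `End_D (Fin n → D)`. -/
def stdFlagEnd (m : List ℕ) {n : ℕ} : Subring (Module.End Dᵐᵒᵖ (Fin n → D)) where
  carrier := {f | ∀ i, ∀ v ∈ stdFlagMem (D := D) m (n := n) i, f v ∈ stdFlagMem (D := D) m i}
  zero_mem' := by intro i v hv; simp
  one_mem' := by intro i v hv; simpa using hv
  add_mem' := by
    intro a b ha hb i v hv
    simpa [LinearMap.add_apply] using (stdFlagMem (D := D) m i).add_mem (ha i v hv) (hb i v hv)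
  neg_mem' := by
    intro a ha i v hv
    simpa [LinearMap.neg_apply] using (stdFlagMem (D := D) m i).neg_mem (ha i v hv)
  mul_mem' := by intro a b ha hb i v hv; exact ha i _ (hb i v hv)

/-- The degree-`τ` homogeneous component of `End_D V(D, n, g)`. -/
def stdEndComp (𝒟 : RingGrading G D) {n : ℕ} (g : Fin n → G) (τ : G) :
    AddSubgroup (Module.End Dᵐᵒᵖ (Fin n → D)) where
  carrier := {f | ∀ (h : G), ∀ v ∈ stdGrading 𝒟 g h, f v ∈ stdGrading 𝒟 g (τ * h)}
  zero_mem' := by intro h v hv; simpa using (stdGrading 𝒟 g _).zero_mem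
  add_mem' := by
    intro a b ha hb h v hv
    simpa [LinearMap.add_apply] using (stdGrading 𝒟 g _).add_mem (ha h v hv) (hb h v hv)
  neg_mem' := by
    intro a ha h v hv
    simpa [LinearMap.neg_apply] using (stdGrading 𝒟 g _).neg_mem (ha h v hv)

/-- `σ ∈ S_{m₁} × ⋯ × S_{m_s}`: the permutation `σ` preserves each consecutive block
of indices of sizes `m₁, …, m_s`. -/
def IsBlockPerm (m : List ℕ) {n : ℕ} (σ : Equiv.Perm (Fin n)) : Prop :=
  ∀ (i : ℕ) (j : Fin n), blockStart m i ≤ (j : ℕ) → (j : ℕ) < blockStart m (i + 1) →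
    blockStart m i ≤ (σ j : ℕ) ∧ (σ j : ℕ) < blockStart m (i + 1)

/-- The support of a grading. -/
def RingGrading.supp (𝒟 : RingGrading G D) : Set G := {g : G | 𝒟.comp g ≠ ⊥}


/-- The upper block triangular matrix algebra `UT(p₁, …, p_s)` with block sizes given
by the list `p`, as a subalgebra of `Matrix (Fin n) (Fin n) K`: the entry `A i j` must
vanish whenever the block of `i` is strictly below the block of `j`. -/
def UTBlock (K : Type*) [Field K] (p : List ℕ) {n : ℕ} :
    Subalgebra K (Matrix (Fin n) (Fin n) K) where
  carrier := {A | ∀ i j : Fin n,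
    (∃ k, (j : ℕ) < blockStart p k ∧ blockStart p k ≤ (i : ℕ)) → A i j = 0}
  zero_mem' := by intro i j _; rfl
  one_mem' := by
    rintro i j ⟨k, hj, hi⟩
    have hij : i ≠ j := by intro h; subst h; omega
    simp [Matrix.one_apply, hij]
  add_mem' := by
    intro a b ha hb i j h
    simp [Matrix.add_apply, ha i j h, hb i j h]
  mul_mem' := by
    rintro a b ha hb i j ⟨k, hj, hi⟩
    have : ∀ l : Fin n, a i l * b l j = 0 := by
      intro l
      rcases lt_or_ge (l : ℕ) (blockStart p k) with h | h
      · rw [ha i l ⟨k, h, hi⟩, zero_mul]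
      · rw [hb l j ⟨k, hj, h⟩, mul_zero]
    simp [Matrix.mul_apply, this]
  algebraMap_mem' := by
    rintro c i j ⟨k, hj, hi⟩
    have hij : i ≠ j := by intro h; subst h; omega
    simp [Matrix.algebraMap_matrix_apply, hij]

set_option synthInstance.maxHeartbeats 1000000 in
open TensorProduct in
/-- The degree-`h` component of the grading on `UT(p₁,…,p_s) ⊗ D` in which
`e_{ij} ⊗ d` is homogeneous of degree `gᵢ (deg d) gⱼ⁻¹`. -/
noncomputable def tensorComp (K : Type*) [Field K] [Algebra K D] (𝒟 : RingGrading G D)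
    (p : List ℕ) {n : ℕ} (g : Fin n → G) (h : G) :
    AddSubgroup (↥(UTBlock K p (n := n)) ⊗[K] D) :=
  AddSubgroup.closure {x | ∃ (i j : Fin n)
    (hij : Matrix.single i j (1 : K) ∈ UTBlock K p (n := n)) (d : D) (k : G),
    d ∈ 𝒟.comp k ∧ g i * k * (g j)⁻¹ = h ∧
    x = (⟨Matrix.single i j (1 : K), hij⟩ : UTBlock K p (n := n)) ⊗ₜ[K] d}

section Aux

open TensorProduct

variable {K : Type*} [Field K] [Algebra K D] {n : ℕ}

set_option synthInstance.maxHeartbeats 1000000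
set_option maxHeartbeats 1000000
set_option maxRecDepth 8000

/-- Left multiplication by `d` as a `Dᵐᵒᵖ`-endomorphism of `Fin n → D`. -/
def lmulEnd (d : D) : Module.End Dᵐᵒᵖ (Fin n → D) where
  toFun v := fun i => d * v i
  map_add' u v := by funext i; simp [mul_add]
  map_smul' c v := by
    funext i
    simp only [Pi.smul_apply, MulOpposite.smul_eq_mul_unop, RingHom.id_apply, mul_assoc]

/-- A matrix over `K` acting as a `Dᵐᵒᵖ`-endomorphism of `Fin n → D`. -/
def matEnd (A : Matrix (Fin n) (Fin n) K) : Module.End Dᵐᵒᵖ (Fin n → D) where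
  toFun v := fun i => ∑ j, A i j • v j
  map_add' u v := by funext i; simp [smul_add, Finset.sum_add_distrib]
  map_smul' c v := by
    funext i
    simp only [Pi.smul_apply, MulOpposite.smul_eq_mul_unop, RingHom.id_apply,
      Finset.sum_mul, smul_mul_assoc]

/-- `lmulEnd` as an algebra homomorphism. -/
def lmulAlg : D →ₐ[K] Module.End Dᵐᵒᵖ (Fin n → D) where
  toFun := lmulEnd
  map_one' := by refine LinearMap.ext fun v => funext fun i => ?_; simp [lmulEnd]
  map_mul' a b := by refine LinearMap.ext fun v => funext fun i => ?_; simp [lmulEnd, Module.End.mul_apply, mul_assoc]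
  map_zero' := by refine LinearMap.ext fun v => funext fun i => ?_; simp [lmulEnd]
  map_add' a b := by refine LinearMap.ext fun v => funext fun i => ?_; simp [lmulEnd, add_mul]
  commutes' k := by
    refine LinearMap.ext fun v => funext fun i => ?_
    show algebraMap K D k * v i = k • v i
    rw [Algebra.smul_def]

/-- `matEnd` as an algebra homomorphism. -/
def matAlg : Matrix (Fin n) (Fin n) K →ₐ[K] Module.End Dᵐᵒᵖ (Fin n → D) where
  toFun := matEnd
  map_one' := by
    ext v i
    simp [matEnd, Matrix.one_apply, Finset.sum_ite_eq, ite_smul]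
  map_mul' A B := by
    refine LinearMap.ext fun v => funext fun i => ?_
    simp only [matEnd, Module.End.mul_apply, LinearMap.coe_mk, AddHom.coe_mk,
      Matrix.mul_apply, Finset.sum_smul, smul_smul, Finset.smul_sum]
    rw [Finset.sum_comm]
  map_zero' := by refine LinearMap.ext fun v => funext fun i => ?_; simp [matEnd]
  map_add' A B := by refine LinearMap.ext fun v => funext fun i => ?_; simp [matEnd, add_smul, Finset.sum_add_distrib]
  commutes' k := by
    refine LinearMap.ext fun v => funext fun i => ?_
    show (∑ j, (algebraMap K (Matrix (Fin n) (Fin n) K) k) i j • v j) = k • v i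
    simp [Matrix.algebraMap_matrix_apply, ite_smul, Finset.sum_ite_eq]

lemma matAlg_lmulAlg_commute (A : Matrix (Fin n) (Fin n) K) (d : D) :
    Commute (matAlg (D := D) A) (lmulAlg (K := K) (n := n) d) := by
  refine LinearMap.ext fun v => funext fun i => ?_
  rw [Module.End.mul_apply, Module.End.mul_apply]
  show ∑ j, A i j • (d * v j) = d * ∑ j, A i j • v j
  rw [Finset.mul_sum]
  simp [mul_smul_comm]

/-- The candidate isomorphism, as an algebra hom into the full endomorphism algebra. -/
noncomputable def psi0 (p : List ℕ) :
    (↥(UTBlock K p (n := n)) ⊗[K] D) →ₐ[K] Module.End Dᵐᵒᵖ (Fin n → D) :=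
  Algebra.TensorProduct.lift
    ((matAlg (D := D)).comp (UTBlock K p (n := n)).val)
    lmulAlg
    (fun A d => matAlg_lmulAlg_commute A.val d)

lemma psi0_tmul_apply (p : List ℕ) (A : ↥(UTBlock K p (n := n))) (d : D)
    (v : Fin n → D) (i : Fin n) :
    psi0 (D := D) p (A ⊗ₜ[K] d) v i = ∑ j, A.val i j • (d * v j) := by
  simp [psi0, Algebra.TensorProduct.lift_tmul, matAlg, lmulAlg, matEnd, lmulEnd,
    Module.End.mul_apply]

lemma pi_eq_sum_single (v : Fin n → D) :
    v = ∑ j, (MulOpposite.op (v j)) • Pi.single j (1 : D) := by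
  funext i
  rw [Finset.sum_apply]
  simp only [Pi.smul_apply, MulOpposite.smul_eq_mul_unop, MulOpposite.unop_op,
    Pi.single_apply]
  simp [Finset.sum_ite_eq]

lemma end_apply_eq (f : Module.End Dᵐᵒᵖ (Fin n → D)) (v : Fin n → D) (i : Fin n) :
    f v i = ∑ j, f (Pi.single j (1 : D)) i * v j := by
  conv_lhs => rw [pi_eq_sum_single v]
  rw [map_sum, Finset.sum_apply]
  simp [MulOpposite.smul_eq_mul_unop]

lemma flagEnd_single_eq_zero {p : List ℕ} {f : Module.End Dᵐᵒᵖ (Fin n → D)}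
    (hf : f ∈ stdFlagEnd (D := D) p (n := n)) {i j : Fin n}
    (h : ∃ k, (j : ℕ) < blockStart p k ∧ blockStart p k ≤ (i : ℕ)) :
    f (Pi.single j (1 : D)) i = 0 := by
  obtain ⟨k, hj, hi⟩ := h
  have hmem : Pi.single j (1 : D) ∈ stdFlagMem (D := D) p (n := n) k := by
    intro l hl
    have : l ≠ j := by
      intro h; subst h; omega
    simp [Pi.single_apply, this]
  exact hf k _ hmem i hi

lemma psi0_mem_flagEnd (p : List ℕ) (x : ↥(UTBlock K p (n := n)) ⊗[K] D) :
    psi0 (D := D) p x ∈ stdFlagEnd (D := D) p (n := n) := by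
  induction x using TensorProduct.induction_on with
  | zero => simpa using (stdFlagEnd (D := D) p (n := n)).zero_mem
  | tmul A d =>
    intro k v hv j hj
    rw [psi0_tmul_apply]
    refine Finset.sum_eq_zero fun l _ => ?_
    rcases lt_or_ge (l : ℕ) (blockStart p k) with h | h
    · rw [A.2 j l ⟨k, h, hj⟩, zero_smul]
    · rw [hv l h, mul_zero, smul_zero]
  | add x y hx hy =>
    rw [map_add]
    exact (stdFlagEnd (D := D) p (n := n)).add_mem hx hy

open scoped Classical in
noncomputable def EUT (p : List ℕ) (i j : Fin n) : ↥(UTBlock K p (n := n)) :=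
  if h : Matrix.single i j (1 : K) ∈ UTBlock K p (n := n) then ⟨_, h⟩ else 0

lemma stdBasisMatrix_mem_UT {p : List ℕ} {i j : Fin n}
    (h : ¬ ∃ k, (j : ℕ) < blockStart p k ∧ blockStart p k ≤ (i : ℕ)) :
    Matrix.single i j (1 : K) ∈ UTBlock K p (n := n) := by
  intro i' j' hij'
  by_cases hii : i = i' ∧ j = j'
  · exact absurd (hii.1 ▸ hii.2 ▸ hij') h
  · rw [Matrix.single]
    simp only [Matrix.of_apply]
    rw [if_neg]
    exact fun hc => hii ⟨hc.1, hc.2⟩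

/-- The inverse map, as a bare function. -/
noncomputable def chi (p : List ℕ) (f : Module.End Dᵐᵒᵖ (Fin n → D)) :
    ↥(UTBlock K p (n := n)) ⊗[K] D :=
  ∑ i, ∑ j, EUT (K := K) p i j ⊗ₜ[K] f (Pi.single j (1 : D)) i


lemma not_mem_UT_pattern {p : List ℕ} {i j : Fin n}
    (hm : ¬ Matrix.single i j (1 : K) ∈ UTBlock K p (n := n)) :
    ∃ k, (j : ℕ) < blockStart p k ∧ blockStart p k ≤ (i : ℕ) := by
  by_contra h; exact hm (stdBasisMatrix_mem_UT h)

lemma sum_smul_EUT {p : List ℕ} (A : ↥(UTBlock K p (n := n))) :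
    ∑ i, ∑ j, A.val i j • EUT (K := K) p i j = A := by
  apply Subtype.ext
  rw [AddSubmonoidClass.coe_finset_sum]
  conv_rhs => rw [Matrix.matrix_eq_sum_single (A.val)]
  refine Finset.sum_congr rfl fun i _ => ?_
  rw [AddSubmonoidClass.coe_finset_sum]
  refine Finset.sum_congr rfl fun j _ => ?_
  rw [SetLike.val_smul]
  by_cases hm : Matrix.single i j (1 : K) ∈ UTBlock K p (n := n)
  · rw [EUT, dif_pos hm, Matrix.smul_single, smul_eq_mul, mul_one]
  · have h0 : A.val i j = 0 := A.2 i j (not_mem_UT_pattern hm)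
    rw [h0, EUT, dif_neg hm, Matrix.single_zero, zero_smul]

lemma psi0_tmul_single (p : List ℕ) (A : ↥(UTBlock K p (n := n))) (d : D) (i j : Fin n) :
    psi0 (D := D) p (A ⊗ₜ[K] d) (Pi.single j (1 : D)) i = A.val i j • d := by
  rw [psi0_tmul_apply]
  rw [Finset.sum_eq_single j]
  · simp
  · intro l _ hl
    simp [Pi.single_apply, hl]
  · simp

lemma chi_psi0 (p : List ℕ) (x : ↥(UTBlock K p (n := n)) ⊗[K] D) :
    chi (K := K) p (psi0 (D := D) p x) = x := by
  induction x using TensorProduct.induction_on with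
  | zero => simp [chi]
  | tmul A d =>
    rw [chi]
    have key : ∀ i j : Fin n,
        (EUT (K := K) p i j ⊗ₜ[K] (psi0 (D := D) p (A ⊗ₜ[K] d)) (Pi.single j (1 : D)) i)
          = (A.val i j • EUT (K := K) p i j) ⊗ₜ[K] d := by
      intro i j
      rw [psi0_tmul_single, TensorProduct.tmul_smul, TensorProduct.smul_tmul']
    simp_rw [key, ← TensorProduct.sum_tmul]
    rw [sum_smul_EUT]
  | add x y hx hy =>
    rw [map_add]
    have : chi (K := K) p (psi0 (D := D) p x + psi0 (D := D) p y)
        = chi (K := K) p (psi0 (D := D) p x) + chi (K := K) p (psi0 (D := D) p y) := by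
      simp [chi, TensorProduct.tmul_add, Finset.sum_add_distrib]
    rw [this, hx, hy]

lemma psi0_chi {p : List ℕ} {f : Module.End Dᵐᵒᵖ (Fin n → D)}
    (hf : f ∈ stdFlagEnd (D := D) p (n := n)) :
    psi0 (D := D) p (chi (K := K) p f) = f := by
  refine LinearMap.ext fun v => funext fun i => ?_
  rw [chi, map_sum]
  simp_rw [map_sum]
  simp only [LinearMap.sum_apply, Finset.sum_apply]
  have key : ∀ i' j : Fin n,
      psi0 (D := D) p (EUT (K := K) p i' j ⊗ₜ[K] f (Pi.single j (1 : D)) i') v i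
        = if i' = i then f (Pi.single j (1 : D)) i * v j else 0 := by
    intro i' j
    by_cases hm : Matrix.single i' j (1 : K) ∈ UTBlock K p (n := n)
    · rw [psi0_tmul_apply]
      have hval : (EUT (K := K) p i' j).val = Matrix.single i' j 1 := by
        rw [EUT, dif_pos hm]
      rw [hval]
      simp only [Matrix.single, Matrix.of_apply, ite_smul, one_smul, zero_smul]
      rcases eq_or_ne i' i with rfl | hne
      · simp [Finset.sum_ite_eq]
      · simp [hne]
    · have h0 : f (Pi.single j (1 : D)) i' = 0 :=
        flagEnd_single_eq_zero hf (not_mem_UT_pattern hm)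
      rcases eq_or_ne i' i with rfl | hne
      · simp [h0]
      · simp [h0, hne]
  simp_rw [key]
  rw [Finset.sum_comm]
  simp only [Finset.sum_ite_eq', Finset.mem_univ, if_true]
  exact (end_apply_eq f v i).symm

end Aux


set_option synthInstance.maxHeartbeats 1000000 in
set_option maxHeartbeats 1000000 in
open TensorProduct in
/-- `UT(p₁,…,p_s) ⊗_K D`, graded so that `deg (e_{ij} ⊗ d) = gᵢ (deg d) gⱼ⁻¹`,
is isomorphic as a `G`-graded algebra to `𝒜(D, p, g) = End_D 𝓕(D, p, g)`. -/
theorem blockTriangular_tensor_iso_flagEnd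
    {K : Type*} [Field K] [Algebra K D] (𝒟 : RingGrading G D) (hdiv : 𝒟.IsDivision)
    (p : List ℕ) (hp : ∀ x ∈ p, 0 < x) (g : Fin p.sum → G) :
    ∃ ψ : (↥(UTBlock K p (n := p.sum)) ⊗[K] D) ≃+* ↥(stdFlagEnd (D := D) p (n := p.sum)),
      ∀ h : G,
        AddSubgroup.map ψ.toRingHom.toAddMonoidHom (tensorComp K 𝒟 p g h) =
          AddSubgroup.comap ((stdFlagEnd (D := D) p (n := p.sum)).subtype).toAddMonoidHom
            (stdEndComp 𝒟 g h) := by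
  classical
  let Ψ : (↥(UTBlock K p (n := p.sum)) ⊗[K] D) →+* ↥(stdFlagEnd (D := D) p (n := p.sum)) :=
    RingHom.codRestrict (psi0 (D := D) p).toRingHom _ (psi0_mem_flagEnd p)
  have hbij : Function.Bijective Ψ := by
    constructor
    · intro x y hxy
      have h1 : psi0 (D := D) p x = psi0 (D := D) p y := congrArg Subtype.val hxy
      rw [← chi_psi0 (K := K) p x, ← chi_psi0 (K := K) p y, h1]
    · intro f
      exact ⟨chi (K := K) p f.val, Subtype.ext (psi0_chi f.2)⟩
  refine ⟨RingEquiv.ofBijective Ψ hbij, fun h => ?_⟩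
  apply le_antisymm
  · rw [tensorComp, AddMonoidHom.map_closure]
    refine (AddSubgroup.closure_le _).2 ?_
    rintro x ⟨y, ⟨i, j, hij, d, k, hd, hk, rfl⟩, rfl⟩
    rw [SetLike.mem_coe, AddSubgroup.mem_comap]
    intro h' v hv i'
    show psi0 (D := D) p
      ((⟨Matrix.single i j (1 : K), hij⟩ : UTBlock K p (n := p.sum)) ⊗ₜ[K] d) v i' ∈ _
    rw [psi0_tmul_apply]
    have hsum : (∑ l, (Matrix.single i j (1 : K)) i' l • (d * v l))
        = if i = i' then d * v j else 0 := by
      simp only [Matrix.single, Matrix.of_apply, ite_smul, one_smul, zero_smul]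
      rcases eq_or_ne i i' with rfl | hne
      · simp [Finset.sum_ite_eq]
      · simp [hne]
    rw [hsum]
    rcases eq_or_ne i i' with rfl | hne
    · rw [if_pos rfl]
      have hcomp : (g i)⁻¹ * (h * h') = k * ((g j)⁻¹ * h') := by rw [← hk]; group
      rw [hcomp]
      exact 𝒟.mul_mem hd (hv j)
    · rw [if_neg hne]
      exact (𝒟.comp _).zero_mem
  · intro f hf
    rw [AddSubgroup.mem_comap] at hf
    rw [AddSubgroup.mem_map]
    refine ⟨chi (K := K) p f.val, ?_, Subtype.ext (psi0_chi f.2)⟩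
    rw [tensorComp, chi]
    refine AddSubgroup.sum_mem (G := ↥(UTBlock K p (n := p.sum)) ⊗[K] D) _ fun i _ =>
      AddSubgroup.sum_mem (G := ↥(UTBlock K p (n := p.sum)) ⊗[K] D) _ fun j _ => ?_
    by_cases hm : Matrix.single i j (1 : K) ∈ UTBlock K p (n := p.sum)
    · apply AddSubgroup.subset_closure
      have hsingle : Pi.single j (1 : D) ∈ stdGrading 𝒟 g (g j) := by
        intro l
        rcases eq_or_ne l j with rfl | hne
        · rw [Pi.single_eq_same, inv_mul_cancel]
          exact 𝒟.one_mem
        · rw [Pi.single_eq_of_ne hne]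
          exact (𝒟.comp _).zero_mem
      have hval := hf (g j) _ hsingle i
      refine ⟨i, j, hm, f.val (Pi.single j (1 : D)) i, (g i)⁻¹ * (h * g j), hval,
        by group, ?_⟩
      rw [EUT, dif_pos hm]
    · have h0 : EUT (K := K) p i j = 0 := by rw [EUT, dif_neg hm]
      rw [h0, TensorProduct.zero_tmul]
      exact zero_mem _
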